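/- The number of partitions of the set {1,...,n} into blocks equals the number of pairs of integer sequences (a_1,...,a_k) and (b_1,...,b_k) (for some k with 0 ≤ k ≤ n-1) such that: the a_i are strictly increasing, the b_i are pairwise distinct, a_i < b_i for all i, and all entries lie in {1,...,n}. (Endpoint notation bijection for set partitions.) -/

import Mathlib

open Finset Nat

variable {α : Type*} [Fintype α] [DecidableEq α]

lemma ofSetoid_ker_part (P : Finpartition (univ : Finset α))
    [DecidableRel (Setoid.ker P.part).r] :
    Finpartition.ofSetoid (Setoid.ker P.part) = P := by
  have hpart : ∀ a, (Finpartition.ofSetoid (Setoid.ker P.part)).part a = P.part a := by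
    intro a
    ext b
    rw [Finpartition.mem_part_ofSetoid_iff_rel, Setoid.ker_def]
    rw [P.mem_part_iff_part_eq_part (mem_univ b) (mem_univ a)]
    exact ⟨fun h => h.symm, fun h => h.symm⟩
  have himg : ∀ Q : Finpartition (univ : Finset α), Q.parts = univ.image Q.part := by
    intro Q
    ext t
    simp only [mem_image, mem_univ, true_and]
    constructor
    · intro ht
      obtain ⟨a, -, ha⟩ := Q.part_surjOn ht
      exact ⟨a, ha⟩
    · rintro ⟨a, rfl⟩
      exact Q.part_mem.2 (mem_univ a)
  ext t
  rw [himg, himg]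
  simp only [mem_image, mem_univ, true_and]
  constructor
  · rintro ⟨a, rfl⟩; exact ⟨a, (hpart a).symm⟩
  · rintro ⟨a, rfl⟩; exact ⟨a, hpart a⟩

lemma ker_part_ofSetoid (s : Setoid α) [DecidableRel s.r] :
    Setoid.ker (Finpartition.ofSetoid s).part = s := by
  ext a b
  rw [Setoid.ker_def]
  constructor
  · intro h
    have hb : b ∈ (Finpartition.ofSetoid s).part a := h ▸ Finpartition.mem_part _ (mem_univ b)
    exact (Finpartition.mem_part_ofSetoid_iff_rel).1 hb
  · intro h
    have hb : b ∈ (Finpartition.ofSetoid s).part a :=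
      (Finpartition.mem_part_ofSetoid_iff_rel).2 h
    exact (((Finpartition.ofSetoid s).mem_part_iff_part_eq_part (mem_univ b) (mem_univ a)).1
      hb).symm

noncomputable def finpartitionEquivSetoid (α : Type*) [Fintype α] [DecidableEq α] :
    Finpartition (univ : Finset α) ≃ Setoid α where
  toFun P := Setoid.ker P.part
  invFun s := @Finpartition.ofSetoid α _ _ s (Classical.decRel _)
  left_inv P := @ofSetoid_ker_part α _ _ P (Classical.decRel _)
  right_inv s := @ker_part_ofSetoid α _ _ s (Classical.decRel _)


variable {n : ℕ}

/-- Arc functions: partial "next element" maps. -/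
def ArcFun (n : ℕ) : Type :=
  {f : Fin n → Option (Fin n) //
    (∀ i j, f i = some j → i < j) ∧ ∀ i₁ i₂ j, f i₁ = some j → f i₂ = some j → i₁ = i₂}

namespace ArcTop

variable (f : Fin n → Option (Fin n))

def topFuel : ℕ → Fin n → Fin n
  | 0, i => i
  | m + 1, i => match f i with
    | none => i
    | some j => topFuel m j

variable {f}

lemma topFuel_none {i : Fin n} (h : f i = none) : ∀ m, topFuel f m i = i
  | 0 => rfl
  | m + 1 => by simp [topFuel, h]

lemma topFuel_some {i j : Fin n} (h : f i = some j) (m : ℕ) :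
    topFuel f (m + 1) i = topFuel f m j := by simp [topFuel, h]

variable (hlt : ∀ i j, f i = some j → i < j)
include hlt

lemma f_topFuel : ∀ m (i : Fin n), n ≤ (i : ℕ) + m → f (topFuel f m i) = none := by
  intro m
  induction m with
  | zero => intro i hi; exact absurd (lt_of_lt_of_le i.isLt hi) (lt_irrefl _)
  | succ m ih =>
    intro i hi
    cases h : f i with
    | none => rw [topFuel_none h]; exact h
    | some j =>
      rw [topFuel_some h]
      exact ih j (le_trans hi (by have := hlt i j h; omega))

def top (f : Fin n → Option (Fin n)) (i : Fin n) : Fin n := topFuel f n i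

lemma topFuel_stable : ∀ m (i : Fin n), n ≤ (i : ℕ) + m → ∀ m', m ≤ m' →
    topFuel f m' i = topFuel f m i := by
  intro m
  induction m with
  | zero => intro i hi; exact absurd (lt_of_lt_of_le i.isLt hi) (lt_irrefl _)
  | succ m ih =>
    intro i hi m' hm'
    obtain ⟨m'', rfl⟩ := Nat.exists_eq_add_of_le hm'
    cases h : f i with
    | none => rw [topFuel_none h, topFuel_none h]
    | some j =>
      have e : m + 1 + m'' = (m + m'') + 1 := by omega
      rw [e, topFuel_some h, topFuel_some h]
      exact ih j (by have := hlt i j h; omega) _ (by omega)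

omit hlt in
lemma top_none {i : Fin n} (h : f i = none) : top f i = i := topFuel_none h n

lemma top_step {i j : Fin n} (h : f i = some j) : top f i = top f j := by
  have hn : 1 ≤ n := i.pos.trans_le (by omega)
  have : top f i = topFuel f (n - 1 + 1) i := by
    unfold top; congr 1; omega
  rw [this, topFuel_some h]
  exact (topFuel_stable hlt (n - 1) j (by have := hlt i j h; omega) n (by omega)).symm

lemma f_top (i : Fin n) : f (top f i) = none := f_topFuel hlt n i (by omega)

lemma top_idem (i : Fin n) : top f (top f i) = top f i := top_none (f_top hlt i)

/-- The step relation. -/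
def R (f : Fin n → Option (Fin n)) (i j : Fin n) : Prop := f i = some j

lemma le_topFuel : ∀ m (i : Fin n), i ≤ topFuel f m i := by
  intro m
  induction m with
  | zero => intro i; exact le_refl _
  | succ m ih =>
    intro i
    cases h : f i with
    | none => rw [topFuel_none h]
    | some j => rw [topFuel_some h]; exact le_of_lt (lt_of_lt_of_le (hlt i j h) (ih j))

lemma le_top (i : Fin n) : i ≤ top f i := le_topFuel hlt n i

omit hlt in
lemma reach_topFuel : ∀ m (i : Fin n), Relation.ReflTransGen (R f) i (topFuel f m i) := by
  intro m
  induction m with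
  | zero => intro i; exact Relation.ReflTransGen.refl
  | succ m ih =>
    intro i
    cases h : f i with
    | none => rw [topFuel_none h]
    | some j => rw [topFuel_some h]; exact Relation.ReflTransGen.head h (ih j)

omit hlt in
lemma reach_top (i : Fin n) : Relation.ReflTransGen (R f) i (top f i) := reach_topFuel n i

lemma reach_le {i j : Fin n} (h : Relation.ReflTransGen (R f) i j) : i ≤ j := by
  induction h with
  | refl => exact le_refl _
  | tail _ hbc ih => exact le_trans ih (le_of_lt (hlt _ _ hbc))

lemma top_reach {i j : Fin n} (h : Relation.ReflTransGen (R f) i j) :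
    top f i = top f j := by
  induction h with
  | refl => rfl
  | tail _ hbc ih => rw [ih, top_step hlt hbc]

omit hlt
variable (hinj : ∀ i₁ i₂ j, f i₁ = some j → f i₂ = some j → i₁ = i₂)
include hinj

lemma reach_pred {y z x : Fin n} (h : Relation.ReflTransGen (R f) y z) (hx : R f x z) :
    y = z ∨ Relation.ReflTransGen (R f) y x := by
  induction h with
  | refl => exact Or.inl rfl
  | @tail b c hab hbc _ =>
    have hb : b = x := hinj _ _ _ hbc hx
    exact Or.inr (hb ▸ hab)

lemma reach_total {x y t : Fin n} (hyt : Relation.ReflTransGen (R f) y t)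
    (hxt : Relation.ReflTransGen (R f) x t) :
    Relation.ReflTransGen (R f) x y ∨ Relation.ReflTransGen (R f) y x := by
  induction hyt with
  | refl => exact Or.inl hxt
  | @tail b c hyb hbc ih =>
    rcases reach_pred hinj hxt hbc with rfl | hxb
    · exact Or.inr (Relation.ReflTransGen.tail hyb hbc)
    · exact ih hxb

end ArcTop

open ArcTop

noncomputable def nextSet (s : Setoid (Fin n)) (i : Fin n) : Finset (Fin n) :=
  @Finset.filter _ (fun j => i < j ∧ s.r i j) (Classical.decPred _) univ

lemma mem_nextSet {s : Setoid (Fin n)} {i j : Fin n} :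
    j ∈ nextSet s i ↔ i < j ∧ s.r i j := by
  simp [nextSet]

noncomputable def nextS (s : Setoid (Fin n)) (i : Fin n) : Option (Fin n) :=
  if h : (nextSet s i).Nonempty then some ((nextSet s i).min' h) else none

lemma nextS_some {s : Setoid (Fin n)} {i j : Fin n} (h : nextS s i = some j) :
    i < j ∧ s.r i j := by
  rw [nextS] at h
  split_ifs at h with hne
  exact mem_nextSet.1 (Option.some_injective _ h ▸ (nextSet s i).min'_mem hne)

lemma nextS_min {s : Setoid (Fin n)} {i j m : Fin n} (h : nextS s i = some j)
    (him : i < m) (hrm : s.r i m) : j ≤ m := by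
  rw [nextS] at h
  split_ifs at h with hne
  exact (Option.some_injective _ h) ▸ (nextSet s i).min'_le m (mem_nextSet.2 ⟨him, hrm⟩)

lemma nextS_none {s : Setoid (Fin n)} {i : Fin n} (h : nextS s i = none) :
    ∀ m, i < m → ¬ s.r i m := by
  intro m him hrm
  rw [nextS] at h
  split_ifs at h with hne
  exact hne ⟨m, mem_nextSet.2 ⟨him, hrm⟩⟩

lemma nextS_lt (s : Setoid (Fin n)) : ∀ i j, nextS s i = some j → i < j :=
  fun _ _ h => (nextS_some h).1

lemma nextS_inj (s : Setoid (Fin n)) :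
    ∀ i₁ i₂ j, nextS s i₁ = some j → nextS s i₂ = some j → i₁ = i₂ := by
  intro i₁ i₂ j h₁ h₂
  by_contra hne
  wlog hlt : i₁ < i₂ generalizing i₁ i₂
  · exact this i₂ i₁ h₂ h₁ (Ne.symm hne) (lt_of_le_of_ne (not_lt.1 hlt) (Ne.symm hne))
  have r₁ := nextS_some h₁
  have r₂ := nextS_some h₂
  have hr12 : s.r i₁ i₂ := s.trans r₁.2 (s.symm r₂.2)
  have := nextS_min h₁ hlt hr12
  exact absurd (lt_of_le_of_lt this r₂.1) (lt_irrefl _)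

noncomputable def setoidToArc (s : Setoid (Fin n)) : ArcFun n :=
  ⟨nextS s, nextS_lt s, nextS_inj s⟩

noncomputable def arcToSetoid (F : ArcFun n) : Setoid (Fin n) :=
  Setoid.ker (ArcTop.top F.1)

lemma rel_of_reach {s : Setoid (Fin n)} {x y : Fin n}
    (h : Relation.ReflTransGen (R (nextS s)) x y) : s.r x y := by
  induction h with
  | refl => exact s.refl _
  | tail _ hbc ih => exact s.trans ih (nextS_some hbc).2

lemma rel_top (s : Setoid (Fin n)) (i : Fin n) : s.r i (top (nextS s) i) :=
  rel_of_reach (reach_top i)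

lemma top_eq_iff (s : Setoid (Fin n)) (a b : Fin n) :
    top (nextS s) a = top (nextS s) b ↔ s.r a b := by
  constructor
  · intro h
    exact s.trans (rel_top s a) (h ▸ s.symm (rel_top s b))
  · intro h
    set t := top (nextS s) a with ht
    set t' := top (nextS s) b with ht'
    have htt' : s.r t t' := s.trans (s.symm (rel_top s a)) (s.trans h (rel_top s b))
    have hft : nextS s t = none := f_top (nextS_lt s) a
    have hft' : nextS s t' = none := f_top (nextS_lt s) b
    rcases lt_trichotomy t t' with hlt | heq | hgt
    · exact absurd htt' (nextS_none hft t' hlt)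
    · exact heq
    · exact absurd (s.symm htt') (nextS_none hft' t hgt)

noncomputable def setoidEquivArc (n : ℕ) : Setoid (Fin n) ≃ ArcFun n where
  toFun := setoidToArc
  invFun := arcToSetoid
  left_inv s := by
    ext a b
    rw [show (arcToSetoid (setoidToArc s)) a b ↔
        top (nextS s) a = top (nextS s) b from Iff.rfl]
    exact top_eq_iff s a b
  right_inv F := by
    obtain ⟨f, hlt, hinj⟩ := F
    apply Subtype.ext
    funext i
    show nextS (Setoid.ker (top f)) i = f i
    have hrel : ∀ a b : Fin n, (Setoid.ker (top f)) a b ↔ top f a = top f b := fun _ _ => Iff.rfl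
    cases hfi : f i with
    | none =>
      have hti : top f i = i := top_none hfi
      rw [nextS]
      split_ifs with hne
      · exfalso
        obtain ⟨m, hm⟩ := hne
        rw [mem_nextSet] at hm
        have h2 : top f i = top f m := hm.2
        have h3 : top f m = i := by rw [← h2, hti]
        have : (m : Fin n) ≤ i := h3 ▸ le_top hlt m
        exact absurd (lt_of_lt_of_le hm.1 this) (lt_irrefl _)
      · rfl
    | some j =>
      have hij : i < j := hlt _ _ hfi
      have htj : top f i = top f j := top_step hlt hfi
      have hjmem : j ∈ nextSet (Setoid.ker (top f)) i := mem_nextSet.2 ⟨hij, htj⟩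
      have hne : (nextSet (Setoid.ker (top f)) i).Nonempty := ⟨j, hjmem⟩
      rw [nextS, dif_pos hne]
      congr 1
      apply le_antisymm ((nextSet _ i).min'_le j hjmem)
      apply Finset.le_min'
      intro m hm
      rw [mem_nextSet] at hm
      obtain ⟨him, htm⟩ := hm
      -- htm : Setoid.ker (top f) i m, i.e. top f i = top f m
      have htm' : top f i = top f m := htm
      have hreach : Relation.ReflTransGen (R f) i m := by
        rcases reach_total hinj (htm' ▸ reach_top m) (reach_top i) with h | h
        · exact h
        · exact absurd (lt_of_lt_of_le him (reach_le hlt h)) (lt_irrefl _)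
      rcases Relation.ReflTransGen.cases_head hreach with rfl | ⟨c, hc, hcm⟩
      · exact absurd him (lt_irrefl _)
      · have : c = j := Option.some_injective _ ((show f i = some c from hc).symm.trans hfi)
        exact this ▸ reach_le hlt hcm


section Part4

variable {n : ℕ}

def supp (F : ArcFun n) : Finset (Fin n) := univ.filter (fun i => (F.1 i).isSome)

lemma mem_supp {F : ArcFun n} {i : Fin n} : i ∈ supp F ↔ (F.1 i).isSome := by
  simp [supp]

lemma supp_card_lt (hn : 0 < n) (F : ArcFun n) : (supp F).card < n := by
  set last : Fin n := ⟨n - 1, by omega⟩ with hlast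
  have hnot : last ∉ supp F := by
    rw [mem_supp]
    intro h
    obtain ⟨j, hj⟩ := Option.isSome_iff_exists.1 h
    have h1 : last < j := F.2.1 last j hj
    have h2 : (last : ℕ) < (j : ℕ) := h1
    have := j.isLt
    simp only [hlast] at h2
    omega
  have hss : supp F ⊂ univ := ⟨subset_univ _, fun h => hnot (h (mem_univ last))⟩
  have := Finset.card_lt_card hss
  simpa using this

noncomputable def aMap (F : ArcFun n) : Fin ((supp F).card) → Fin n :=
  (supp F).orderEmbOfFin rfl

lemma aMap_mem (F : ArcFun n) (t : Fin ((supp F).card)) : aMap F t ∈ supp F :=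
  Finset.orderEmbOfFin_mem _ _ _

noncomputable def bMap (F : ArcFun n) (t : Fin ((supp F).card)) : Fin n :=
  (F.1 (aMap F t)).get (mem_supp.1 (aMap_mem F t))

lemma bMap_spec (F : ArcFun n) (t : Fin ((supp F).card)) :
    F.1 (aMap F t) = some (bMap F t) := (Option.some_get _).symm

noncomputable def arcToSeq (hn : 0 < n) (F : ArcFun n) :
    Σ k : Fin n, {ab : (Fin (k : ℕ) → Fin n) × (Fin (k : ℕ) → Fin n) //
      StrictMono ab.1 ∧ Function.Injective ab.2 ∧ ∀ i, ab.1 i < ab.2 i} :=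
  ⟨⟨(supp F).card, supp_card_lt hn F⟩, ⟨(aMap F, bMap F),
    ((supp F).orderEmbOfFin rfl).strictMono,
    by
      intro t₁ t₂ h
      have h₁ := bMap_spec F t₁
      have h₂ := bMap_spec F t₂
      rw [show bMap F t₁ = bMap F t₂ from h] at h₁
      have := F.2.2 _ _ _ h₁ h₂
      exact ((supp F).orderEmbOfFin rfl).injective this,
    fun t => F.2.1 _ _ (bMap_spec F t)⟩⟩

noncomputable def seqToArcFun {k : Fin n}
    (ab : (Fin (k : ℕ) → Fin n) × (Fin (k : ℕ) → Fin n)) (i : Fin n) : Option (Fin n) :=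
  @dite _ (∃ t, ab.1 t = i) (Classical.dec _) (fun h => some (ab.2 h.choose)) (fun _ => none)

lemma seqToArcFun_eq_some {k : Fin n}
    {ab : (Fin (k : ℕ) → Fin n) × (Fin (k : ℕ) → Fin n)} (ha : Function.Injective ab.1)
    {t : Fin (k : ℕ)} : seqToArcFun ab (ab.1 t) = some (ab.2 t) := by
  rw [seqToArcFun, dif_pos ⟨t, rfl⟩]
  congr 1
  exact congrArg ab.2 (ha (Exists.choose_spec (⟨t, rfl⟩ : ∃ u, ab.1 u = ab.1 t)))

lemma seqToArcFun_eq_none {k : Fin n}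
    {ab : (Fin (k : ℕ) → Fin n) × (Fin (k : ℕ) → Fin n)} {i : Fin n}
    (h : ¬∃ t, ab.1 t = i) : seqToArcFun ab i = none := dif_neg h

lemma seqToArcFun_lt {k : Fin n}
    {ab : (Fin (k : ℕ) → Fin n) × (Fin (k : ℕ) → Fin n)} (hab : ∀ i, ab.1 i < ab.2 i) :
    ∀ i j, seqToArcFun ab i = some j → i < j := by
  intro i j h
  rw [seqToArcFun] at h
  split_ifs at h with he
  have h2 := hab he.choose
  rw [he.choose_spec] at h2
  rwa [show ab.2 he.choose = j from Option.some_injective _ h] at h2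

lemma seqToArcFun_inj {k : Fin n}
    {ab : (Fin (k : ℕ) → Fin n) × (Fin (k : ℕ) → Fin n)} (hb : Function.Injective ab.2) :
    ∀ i₁ i₂ j, seqToArcFun ab i₁ = some j → seqToArcFun ab i₂ = some j → i₁ = i₂ := by
  intro i₁ i₂ j h₁ h₂
  rw [seqToArcFun] at h₁ h₂
  split_ifs at h₁ h₂ with he₁ he₂
  have e1 : j = ab.2 he₁.choose := (Option.some_injective _ h₁).symm
  have e2 : j = ab.2 he₂.choose := (Option.some_injective _ h₂).symm
  have : he₁.choose = he₂.choose := hb (e1 ▸ e2)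
  rw [← he₁.choose_spec, ← he₂.choose_spec, this]

noncomputable def seqToArc
    (x : Σ k : Fin n, {ab : (Fin (k : ℕ) → Fin n) × (Fin (k : ℕ) → Fin n) //
      StrictMono ab.1 ∧ Function.Injective ab.2 ∧ ∀ i, ab.1 i < ab.2 i}) : ArcFun n :=
  ⟨seqToArcFun x.2.1, seqToArcFun_lt x.2.2.2.2, seqToArcFun_inj x.2.2.2.1⟩

lemma seqToArc_arcToSeq (hn : 0 < n) (F : ArcFun n) : seqToArc (arcToSeq hn F) = F := by
  apply Subtype.ext
  funext i
  show seqToArcFun (k := ⟨(supp F).card, supp_card_lt hn F⟩) (aMap F, bMap F) i = F.1 i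
  by_cases hi : i ∈ supp F
  · have hex : ∃ t, aMap F t = i := by
      have h1 : (i : Fin n) ∈ (supp F : Set (Fin n)) := hi
      rw [← Finset.range_orderEmbOfFin (supp F) rfl] at h1
      exact h1
    obtain ⟨t, rfl⟩ := hex
    rw [show aMap F t = (Prod.mk (β := Fin ((supp F).card) → Fin n) (aMap F) (bMap F)).1 t
        from rfl,
      seqToArcFun_eq_some (k := ⟨(supp F).card, supp_card_lt hn F⟩)
        (((supp F).orderEmbOfFin rfl).injective)]
    exact (bMap_spec F t).symm
  · rw [seqToArcFun_eq_none, eq_comm]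
    · rw [← Option.not_isSome_iff_eq_none]
      exact fun h => hi (mem_supp.2 h)
    · rintro ⟨t, rfl⟩
      exact hi (aMap_mem F t)

lemma seq_heq {m m' : ℕ} (h : m' = m)
    (y' : {ab : (Fin m' → Fin n) × (Fin m' → Fin n) //
      StrictMono ab.1 ∧ Function.Injective ab.2 ∧ ∀ i, ab.1 i < ab.2 i})
    (y : {ab : (Fin m → Fin n) × (Fin m → Fin n) //
      StrictMono ab.1 ∧ Function.Injective ab.2 ∧ ∀ i, ab.1 i < ab.2 i})
    (hval : ∀ t : Fin m', y'.1.1 t = y.1.1 (Fin.cast h t) ∧ y'.1.2 t = y.1.2 (Fin.cast h t)) :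
    HEq y' y := by
  subst h
  apply heq_of_eq
  apply Subtype.ext
  have h1 : y'.1.1 = y.1.1 := funext fun t => (hval t).1
  have h2 : y'.1.2 = y.1.2 := funext fun t => (hval t).2
  exact Prod.ext h1 h2

lemma arcToSeq_seqToArc (hn : 0 < n)
    (x : Σ k : Fin n, {ab : (Fin (k : ℕ) → Fin n) × (Fin (k : ℕ) → Fin n) //
      StrictMono ab.1 ∧ Function.Injective ab.2 ∧ ∀ i, ab.1 i < ab.2 i}) :
    arcToSeq hn (seqToArc x) = x := by
  obtain ⟨k, y⟩ := x
  obtain ⟨ab, ha, hb, hab⟩ := y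
  set F : ArcFun n := seqToArc ⟨k, ⟨ab, ha, hb, hab⟩⟩ with hFdef
  have hFfun : F.1 = seqToArcFun ab := rfl
  have hsupp : supp F = Finset.image ab.1 univ := by
    ext i
    rw [mem_supp, Finset.mem_image]
    constructor
    · intro h
      by_contra hc
      push_neg at hc
      rw [hFfun, seqToArcFun_eq_none (fun ⟨t, ht⟩ => hc t (mem_univ t) ht)] at h
      exact absurd h (by simp)
    · rintro ⟨t, -, rfl⟩
      rw [hFfun, seqToArcFun_eq_some ha.injective]
      simp
  have hcard : (supp F).card = (k : ℕ) := by
    rw [hsupp, Finset.card_image_of_injective _ ha.injective]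
    simp
  have haeq : ∀ t : Fin ((supp F).card), aMap F t = ab.1 (Fin.cast hcard t) := by
    have hmono : StrictMono (fun t : Fin ((supp F).card) => ab.1 (Fin.cast hcard t)) :=
      ha.comp (fun _ _ h => h)
    have hmem : ∀ t : Fin ((supp F).card), ab.1 (Fin.cast hcard t) ∈ supp F := by
      intro t
      have hm : ab.1 (Fin.cast hcard t) ∈ Finset.image ab.1 univ :=
        Finset.mem_image.2 ⟨_, mem_univ _, rfl⟩
      rwa [← hsupp] at hm
    have := Finset.orderEmbOfFin_unique (f := fun t : Fin ((supp F).card) =>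
      ab.1 (Fin.cast hcard t)) rfl hmem hmono
    intro t
    rw [aMap, ← this]
  have hbeq : ∀ t : Fin ((supp F).card), bMap F t = ab.2 (Fin.cast hcard t) := by
    intro t
    have h1 : F.1 (aMap F t) = some (bMap F t) := bMap_spec F t
    rw [haeq t, hFfun, seqToArcFun_eq_some ha.injective] at h1
    exact (Option.some_injective _ h1).symm
  refine Sigma.ext (Fin.ext ?_) ?_
  · exact hcard
  · exact seq_heq hcard _ _ (fun t => ⟨haeq t, hbeq t⟩)

end Part4


/-- the number of set partitions of {1,...,n} equals the number of
pairs of sequences (a₁,...,a_k), (b₁,...,b_k) (some 0 ≤ k ≤ n-1) with a strictly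
increasing, b pairwise distinct, aᵢ < bᵢ, all entries in {1,...,n}. -/
theorem stmt0 (n : ℕ) (hn : 1 ≤ n) :
    Nat.card (Finpartition (univ : Finset (Fin n))) =
      Nat.card (Σ k : Fin n, {ab : (Fin (k : ℕ) → Fin n) × (Fin (k : ℕ) → Fin n) //
        StrictMono ab.1 ∧ Function.Injective ab.2 ∧ ∀ i, ab.1 i < ab.2 i}) := by
  exact Nat.card_congr ((finpartitionEquivSetoid (Fin n)).trans ((setoidEquivArc n).trans
    ⟨arcToSeq hn, seqToArc, seqToArc_arcToSeq hn, arcToSeq_seqToArc hn⟩))
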